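/- In the sequential game on the five-job instance J1: (3−11ε, ε), J2: (ε, 2−9ε), J3: (ε, 2−8ε), J4: (1−2ε, 1−2ε), J5: (2−8ε, 1−2ε), where jobs choose machines in order J1,...,J5 by backwards induction and break ties in favor of machine M1, the subgame perfect equilibrium outcome assigns J1, J3 to M1 and J2, J4, J5 to M2, yielding makespan 4−13ε. -/

import Mathlib

open Classical Finset

noncomputable section

/-- The five-job two-machine instance: `P5 ε j i` is the processing time of
job `j` (0-indexed: J1 = 0, …, J5 = 4) on machine `i` (M1 = 0, M2 = 1). -/
def P5 (ε : ℝ) : ℕ → Fin 2 → ℝ := fun j i =>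
  if j = 0 then (if i = 0 then 3 - 11*ε else ε)
  else if j = 1 then (if i = 0 then ε else 2 - 9*ε)
  else if j = 2 then (if i = 0 then ε else 2 - 8*ε)
  else if j = 3 then 1 - 2*ε
  else if j = 4 then (if i = 0 then 2 - 8*ε else 1 - 2*ε)
  else 0

/-- Load of machine `i` given the list `s` of machine choices of jobs `0, 1, …`. -/
def mLoad (P : ℕ → Fin 2 → ℝ) (s : List (Fin 2)) (i : Fin 2) : ℝ :=
  ∑ j ∈ Finset.range s.length, if s.getD j 0 = i then P j i else 0

/-- Makespan of a full list of choices. -/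
def lMk (P : ℕ → Fin 2 → ℝ) (s : List (Fin 2)) : ℝ :=
  max (mLoad P s 0) (mLoad P s 1)

/-- Backwards-induction (subgame perfect) play of the sequential game with `n`
players moving in order `0, 1, …, n − 1`, starting from the history `pref` of
choices already made.  Each player chooses the machine minimizing the final
load of her own machine, breaking ties in favor of machine `M1` (= `0`). -/
def spe (P : ℕ → Fin 2 → ℝ) (n : ℕ) (pref : List (Fin 2)) : List (Fin 2) :=
  if h : n ≤ pref.length then pref
  else
    let s0 := spe P n (pref ++ [0])
    let s1 := spe P n (pref ++ [1])
    if mLoad P s0 0 ≤ mLoad P s1 1 then s0 else s1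
termination_by n - pref.length
decreasing_by all_goals simp [List.length_append]; omega

lemma spe_leaf (P : ℕ → Fin 2 → ℝ) (p : List (Fin 2)) (h : 5 ≤ p.length) :
    spe P 5 p = p := by rw [spe, dif_pos h]

lemma n_0000 (ε : ℝ) (h1 : 0 < ε) (h2 : ε ≤ 1/100) :
    spe (P5 ε) 5 [0, 0, 0, 0] = [0, 0, 0, 0, 1] := by
  rw [spe, dif_neg (by simp)]
  simp only [List.cons_append, List.nil_append]
  rw [spe_leaf _ _ (by simp), spe_leaf _ _ (by simp)]
  rw [if_neg (by norm_num [mLoad, P5, Finset.sum_range_succ]; linarith)]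

lemma n_0001 (ε : ℝ) (h1 : 0 < ε) (h2 : ε ≤ 1/100) :
    spe (P5 ε) 5 [0, 0, 0, 1] = [0, 0, 0, 1, 1] := by
  rw [spe, dif_neg (by simp)]
  simp only [List.cons_append, List.nil_append]
  rw [spe_leaf _ _ (by simp), spe_leaf _ _ (by simp)]
  rw [if_neg (by norm_num [mLoad, P5, Finset.sum_range_succ]; linarith)]

lemma n_0010 (ε : ℝ) (h1 : 0 < ε) (h2 : ε ≤ 1/100) :
    spe (P5 ε) 5 [0, 0, 1, 0] = [0, 0, 1, 0, 1] := by
  rw [spe, dif_neg (by simp)]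
  simp only [List.cons_append, List.nil_append]
  rw [spe_leaf _ _ (by simp), spe_leaf _ _ (by simp)]
  rw [if_neg (by norm_num [mLoad, P5, Finset.sum_range_succ]; linarith)]

lemma n_0011 (ε : ℝ) (h1 : 0 < ε) (h2 : ε ≤ 1/100) :
    spe (P5 ε) 5 [0, 0, 1, 1] = [0, 0, 1, 1, 1] := by
  rw [spe, dif_neg (by simp)]
  simp only [List.cons_append, List.nil_append]
  rw [spe_leaf _ _ (by simp), spe_leaf _ _ (by simp)]
  rw [if_neg (by norm_num [mLoad, P5, Finset.sum_range_succ]; linarith)]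

lemma n_0100 (ε : ℝ) (h1 : 0 < ε) (h2 : ε ≤ 1/100) :
    spe (P5 ε) 5 [0, 1, 0, 0] = [0, 1, 0, 0, 1] := by
  rw [spe, dif_neg (by simp)]
  simp only [List.cons_append, List.nil_append]
  rw [spe_leaf _ _ (by simp), spe_leaf _ _ (by simp)]
  rw [if_neg (by norm_num [mLoad, P5, Finset.sum_range_succ]; linarith)]

lemma n_0101 (ε : ℝ) (h1 : 0 < ε) (h2 : ε ≤ 1/100) :
    spe (P5 ε) 5 [0, 1, 0, 1] = [0, 1, 0, 1, 1] := by
  rw [spe, dif_neg (by simp)]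
  simp only [List.cons_append, List.nil_append]
  rw [spe_leaf _ _ (by simp), spe_leaf _ _ (by simp)]
  rw [if_neg (by norm_num [mLoad, P5, Finset.sum_range_succ]; linarith)]

lemma n_0110 (ε : ℝ) (h1 : 0 < ε) (h2 : ε ≤ 1/100) :
    spe (P5 ε) 5 [0, 1, 1, 0] = [0, 1, 1, 0, 1] := by
  rw [spe, dif_neg (by simp)]
  simp only [List.cons_append, List.nil_append]
  rw [spe_leaf _ _ (by simp), spe_leaf _ _ (by simp)]
  rw [if_neg (by norm_num [mLoad, P5, Finset.sum_range_succ]; linarith)]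

lemma n_0111 (ε : ℝ) (h1 : 0 < ε) (h2 : ε ≤ 1/100) :
    spe (P5 ε) 5 [0, 1, 1, 1] = [0, 1, 1, 1, 0] := by
  rw [spe, dif_neg (by simp)]
  simp only [List.cons_append, List.nil_append]
  rw [spe_leaf _ _ (by simp), spe_leaf _ _ (by simp)]
  rw [if_pos (by norm_num [mLoad, P5, Finset.sum_range_succ]; linarith)]

lemma n_1000 (ε : ℝ) (h1 : 0 < ε) (h2 : ε ≤ 1/100) :
    spe (P5 ε) 5 [1, 0, 0, 0] = [1, 0, 0, 0, 1] := by
  rw [spe, dif_neg (by simp)]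
  simp only [List.cons_append, List.nil_append]
  rw [spe_leaf _ _ (by simp), spe_leaf _ _ (by simp)]
  rw [if_neg (by norm_num [mLoad, P5, Finset.sum_range_succ]; linarith)]

lemma n_1001 (ε : ℝ) (h1 : 0 < ε) (h2 : ε ≤ 1/100) :
    spe (P5 ε) 5 [1, 0, 0, 1] = [1, 0, 0, 1, 0] := by
  rw [spe, dif_neg (by simp)]
  simp only [List.cons_append, List.nil_append]
  rw [spe_leaf _ _ (by simp), spe_leaf _ _ (by simp)]
  rw [if_pos (by norm_num [mLoad, P5, Finset.sum_range_succ]; linarith)]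

lemma n_1010 (ε : ℝ) (h1 : 0 < ε) (h2 : ε ≤ 1/100) :
    spe (P5 ε) 5 [1, 0, 1, 0] = [1, 0, 1, 0, 0] := by
  rw [spe, dif_neg (by simp)]
  simp only [List.cons_append, List.nil_append]
  rw [spe_leaf _ _ (by simp), spe_leaf _ _ (by simp)]
  rw [if_pos (by norm_num [mLoad, P5, Finset.sum_range_succ]; linarith)]

lemma n_1011 (ε : ℝ) (h1 : 0 < ε) (h2 : ε ≤ 1/100) :
    spe (P5 ε) 5 [1, 0, 1, 1] = [1, 0, 1, 1, 0] := by
  rw [spe, dif_neg (by simp)]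
  simp only [List.cons_append, List.nil_append]
  rw [spe_leaf _ _ (by simp), spe_leaf _ _ (by simp)]
  rw [if_pos (by norm_num [mLoad, P5, Finset.sum_range_succ]; linarith)]

lemma n_1100 (ε : ℝ) (h1 : 0 < ε) (h2 : ε ≤ 1/100) :
    spe (P5 ε) 5 [1, 1, 0, 0] = [1, 1, 0, 0, 1] := by
  rw [spe, dif_neg (by simp)]
  simp only [List.cons_append, List.nil_append]
  rw [spe_leaf _ _ (by simp), spe_leaf _ _ (by simp)]
  rw [if_neg (by norm_num [mLoad, P5, Finset.sum_range_succ]; linarith)]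

lemma n_1101 (ε : ℝ) (h1 : 0 < ε) (h2 : ε ≤ 1/100) :
    spe (P5 ε) 5 [1, 1, 0, 1] = [1, 1, 0, 1, 0] := by
  rw [spe, dif_neg (by simp)]
  simp only [List.cons_append, List.nil_append]
  rw [spe_leaf _ _ (by simp), spe_leaf _ _ (by simp)]
  rw [if_pos (by norm_num [mLoad, P5, Finset.sum_range_succ]; linarith)]

lemma n_1110 (ε : ℝ) (h1 : 0 < ε) (h2 : ε ≤ 1/100) :
    spe (P5 ε) 5 [1, 1, 1, 0] = [1, 1, 1, 0, 0] := by
  rw [spe, dif_neg (by simp)]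
  simp only [List.cons_append, List.nil_append]
  rw [spe_leaf _ _ (by simp), spe_leaf _ _ (by simp)]
  rw [if_pos (by norm_num [mLoad, P5, Finset.sum_range_succ]; linarith)]

lemma n_1111 (ε : ℝ) (h1 : 0 < ε) (h2 : ε ≤ 1/100) :
    spe (P5 ε) 5 [1, 1, 1, 1] = [1, 1, 1, 1, 0] := by
  rw [spe, dif_neg (by simp)]
  simp only [List.cons_append, List.nil_append]
  rw [spe_leaf _ _ (by simp), spe_leaf _ _ (by simp)]
  rw [if_pos (by norm_num [mLoad, P5, Finset.sum_range_succ]; linarith)]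

lemma n_000 (ε : ℝ) (h1 : 0 < ε) (h2 : ε ≤ 1/100) :
    spe (P5 ε) 5 [0, 0, 0] = [0, 0, 0, 1, 1] := by
  rw [spe, dif_neg (by simp)]
  simp only [List.cons_append, List.nil_append]
  rw [n_0000 ε h1 h2, n_0001 ε h1 h2]
  rw [if_neg (by norm_num [mLoad, P5, Finset.sum_range_succ]; linarith)]

lemma n_001 (ε : ℝ) (h1 : 0 < ε) (h2 : ε ≤ 1/100) :
    spe (P5 ε) 5 [0, 0, 1] = [0, 0, 1, 0, 1] := by
  rw [spe, dif_neg (by simp)]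
  simp only [List.cons_append, List.nil_append]
  rw [n_0010 ε h1 h2, n_0011 ε h1 h2]
  rw [if_pos (by norm_num [mLoad, P5, Finset.sum_range_succ]; linarith)]

lemma n_010 (ε : ℝ) (h1 : 0 < ε) (h2 : ε ≤ 1/100) :
    spe (P5 ε) 5 [0, 1, 0] = [0, 1, 0, 1, 1] := by
  rw [spe, dif_neg (by simp)]
  simp only [List.cons_append, List.nil_append]
  rw [n_0100 ε h1 h2, n_0101 ε h1 h2]
  rw [if_neg (by norm_num [mLoad, P5, Finset.sum_range_succ]; linarith)]

lemma n_011 (ε : ℝ) (h1 : 0 < ε) (h2 : ε ≤ 1/100) :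
    spe (P5 ε) 5 [0, 1, 1] = [0, 1, 1, 0, 1] := by
  rw [spe, dif_neg (by simp)]
  simp only [List.cons_append, List.nil_append]
  rw [n_0110 ε h1 h2, n_0111 ε h1 h2]
  rw [if_pos (by norm_num [mLoad, P5, Finset.sum_range_succ]; linarith)]

lemma n_100 (ε : ℝ) (h1 : 0 < ε) (h2 : ε ≤ 1/100) :
    spe (P5 ε) 5 [1, 0, 0] = [1, 0, 0, 1, 0] := by
  rw [spe, dif_neg (by simp)]
  simp only [List.cons_append, List.nil_append]
  rw [n_1000 ε h1 h2, n_1001 ε h1 h2]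
  rw [if_neg (by norm_num [mLoad, P5, Finset.sum_range_succ]; linarith)]

lemma n_101 (ε : ℝ) (h1 : 0 < ε) (h2 : ε ≤ 1/100) :
    spe (P5 ε) 5 [1, 0, 1] = [1, 0, 1, 0, 0] := by
  rw [spe, dif_neg (by simp)]
  simp only [List.cons_append, List.nil_append]
  rw [n_1010 ε h1 h2, n_1011 ε h1 h2]
  rw [if_pos (by norm_num [mLoad, P5, Finset.sum_range_succ]; linarith)]

lemma n_110 (ε : ℝ) (h1 : 0 < ε) (h2 : ε ≤ 1/100) :
    spe (P5 ε) 5 [1, 1, 0] = [1, 1, 0, 0, 1] := by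
  rw [spe, dif_neg (by simp)]
  simp only [List.cons_append, List.nil_append]
  rw [n_1100 ε h1 h2, n_1101 ε h1 h2]
  rw [if_pos (by norm_num [mLoad, P5, Finset.sum_range_succ]; linarith)]

lemma n_111 (ε : ℝ) (h1 : 0 < ε) (h2 : ε ≤ 1/100) :
    spe (P5 ε) 5 [1, 1, 1] = [1, 1, 1, 0, 0] := by
  rw [spe, dif_neg (by simp)]
  simp only [List.cons_append, List.nil_append]
  rw [n_1110 ε h1 h2, n_1111 ε h1 h2]
  rw [if_pos (by norm_num [mLoad, P5, Finset.sum_range_succ]; linarith)]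

lemma n_00 (ε : ℝ) (h1 : 0 < ε) (h2 : ε ≤ 1/100) :
    spe (P5 ε) 5 [0, 0] = [0, 0, 1, 0, 1] := by
  rw [spe, dif_neg (by simp)]
  simp only [List.cons_append, List.nil_append]
  rw [n_000 ε h1 h2, n_001 ε h1 h2]
  rw [if_neg (by norm_num [mLoad, P5, Finset.sum_range_succ]; linarith)]

lemma n_01 (ε : ℝ) (h1 : 0 < ε) (h2 : ε ≤ 1/100) :
    spe (P5 ε) 5 [0, 1] = [0, 1, 0, 1, 1] := by
  rw [spe, dif_neg (by simp)]
  simp only [List.cons_append, List.nil_append]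
  rw [n_010 ε h1 h2, n_011 ε h1 h2]
  rw [if_pos (by norm_num [mLoad, P5, Finset.sum_range_succ]; linarith)]

lemma n_10 (ε : ℝ) (h1 : 0 < ε) (h2 : ε ≤ 1/100) :
    spe (P5 ε) 5 [1, 0] = [1, 0, 1, 0, 0] := by
  rw [spe, dif_neg (by simp)]
  simp only [List.cons_append, List.nil_append]
  rw [n_100 ε h1 h2, n_101 ε h1 h2]
  rw [if_neg (by norm_num [mLoad, P5, Finset.sum_range_succ]; linarith)]

lemma n_11 (ε : ℝ) (h1 : 0 < ε) (h2 : ε ≤ 1/100) :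
    spe (P5 ε) 5 [1, 1] = [1, 1, 0, 0, 1] := by
  rw [spe, dif_neg (by simp)]
  simp only [List.cons_append, List.nil_append]
  rw [n_110 ε h1 h2, n_111 ε h1 h2]
  rw [if_pos (by norm_num [mLoad, P5, Finset.sum_range_succ]; linarith)]

lemma n_0 (ε : ℝ) (h1 : 0 < ε) (h2 : ε ≤ 1/100) :
    spe (P5 ε) 5 [0] = [0, 1, 0, 1, 1] := by
  rw [spe, dif_neg (by simp)]
  simp only [List.cons_append, List.nil_append]
  rw [n_00 ε h1 h2, n_01 ε h1 h2]
  rw [if_neg (by norm_num [mLoad, P5, Finset.sum_range_succ]; linarith)]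

lemma n_1 (ε : ℝ) (h1 : 0 < ε) (h2 : ε ≤ 1/100) :
    spe (P5 ε) 5 [1] = [1, 1, 0, 0, 1] := by
  rw [spe, dif_neg (by simp)]
  simp only [List.cons_append, List.nil_append]
  rw [n_10 ε h1 h2, n_11 ε h1 h2]
  rw [if_neg (by norm_num [mLoad, P5, Finset.sum_range_succ]; linarith)]

lemma n_e (ε : ℝ) (h1 : 0 < ε) (h2 : ε ≤ 1/100) :
    spe (P5 ε) 5 [] = [0, 1, 0, 1, 1] := by
  rw [spe, dif_neg (by simp)]
  simp only [List.cons_append, List.nil_append]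
  rw [n_0 ε h1 h2, n_1 ε h1 h2]
  rw [if_pos (by norm_num [mLoad, P5, Finset.sum_range_succ]; linarith)]

/-- For `0 < ε ≤ 1/100`, the subgame perfect equilibrium outcome of the
five-job sequential game (ties broken in favor of M1) assigns J1, J3 to M1 and
J2, J4, J5 to M2, yielding makespan `4 − 13ε`. -/
theorem five_job_spe_outcome :
    ∀ ε : ℝ, 0 < ε → ε ≤ 1/100 →
      spe (P5 ε) 5 [] = [0, 1, 0, 1, 1] ∧
      lMk (P5 ε) (spe (P5 ε) 5 []) = 4 - 13*ε := by
  intro ε h1 h2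
  have h := n_e ε h1 h2
  refine ⟨h, ?_⟩
  rw [h]
  unfold lMk
  rw [max_eq_right (by norm_num [mLoad, P5, Finset.sum_range_succ]; linarith)]
  norm_num [mLoad, P5, Finset.sum_range_succ, Fin.ext_iff]
  ring

end
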